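/- Let G be a finite Abelian group with a unique involution (unique element of order 2). Then the Cayley table of G admits no k-weight for any odd integer k. -/

import Mathlib

/-- A `k`-weight of the Cayley table of an additive group `G`
(the latin square with symbol `x + y` in cell `(x, y)`):
all row, column, and symbol sums equal `k`. -/
def IsCayleyWeight {G : Type*} [AddCommGroup G] [Fintype G] (θ : G × G → ℤ) (k : ℤ) : Prop :=
  (∀ x : G, ∑ y : G, θ (x, y) = k) ∧ (∀ y : G, ∑ x : G, θ (x, y) = k) ∧
  (∀ z : G, ∑ x : G, θ (x, z - x) = k)

theorem no_odd_weight_of_unique_involution {G : Type*} [AddCommGroup G] [Fintype G]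
    (hu : ∃! u : G, u ≠ 0 ∧ u + u = 0) :
    ∀ k : ℤ, Odd k → ¬ ∃ θ : G × G → ℤ, IsCayleyWeight θ k := by
  classical
  obtain ⟨u, ⟨hu0, huu⟩, huniq⟩ := hu
  rintro k hk ⟨θ, hrow, hcol, hsym⟩
  set s : G := ∑ g : G, g with hs
  -- the sum of all elements is the unique involution
  have hfilter : Finset.univ.filter (fun g : G => g + g = 0) = {0, u} := by
    ext g
    simp only [Finset.mem_filter, Finset.mem_univ, true_and, Finset.mem_insert,
      Finset.mem_singleton]
    constructor
    · intro hg
      by_cases h0 : g = 0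
      · exact Or.inl h0
      · exact Or.inr (huniq g ⟨h0, hg⟩)
    · rintro (rfl | rfl) <;> simp [huu]
  have hA : ∑ g ∈ Finset.univ.filter (fun g : G => ¬ (g + g = 0)), g = 0 := by
    refine Finset.sum_involution (fun a _ => -a) (fun a _ => add_neg_cancel a)
      (fun a ha _ => ?_) (fun a ha => ?_) (fun a _ => neg_neg a)
    · simp only [Finset.mem_filter, Finset.mem_univ, true_and] at ha
      intro h
      exact ha (by nth_rewrite 2 [← h]; exact add_neg_cancel a)
    · simp only [Finset.mem_filter, Finset.mem_univ, true_and] at ha ⊢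
      intro h
      exact ha (by have := congrArg Neg.neg h; simpa using this)
  have hsu : s = u := by
    rw [hs, ← Finset.sum_filter_add_sum_filter_not Finset.univ (fun g : G => g + g = 0),
      hfilter, hA, add_zero, Finset.sum_insert (by simpa using hu0.symm),
      Finset.sum_singleton, zero_add]
  have h2s : s + s = 0 := by rw [hsu]; exact huu
  -- evaluate the double sum two ways
  have e1 : ∑ x : G, ∑ y : G, θ (x, y) • (x + y) = k • s + k • s := by
    have : ∀ x : G, ∑ y : G, θ (x, y) • (x + y)
        = (∑ y : G, θ (x, y) • x) + ∑ y : G, θ (x, y) • y := by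
      intro x
      rw [← Finset.sum_add_distrib]
      exact Finset.sum_congr rfl fun y _ => (smul_add _ _ _)
    simp only [this]
    rw [Finset.sum_add_distrib]
    congr 1
    · calc ∑ x : G, ∑ y : G, θ (x, y) • x
          = ∑ x : G, (∑ y : G, θ (x, y)) • x := by
            refine Finset.sum_congr rfl fun x _ => ?_
            rw [Finset.sum_smul]
        _ = ∑ x : G, k • x := by
            refine Finset.sum_congr rfl fun x _ => by rw [hrow x]
        _ = k • s := by rw [hs, Finset.smul_sum]
    · calc ∑ x : G, ∑ y : G, θ (x, y) • y
          = ∑ y : G, ∑ x : G, θ (x, y) • y := Finset.sum_comm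
        _ = ∑ y : G, (∑ x : G, θ (x, y)) • y := by
            refine Finset.sum_congr rfl fun y _ => ?_
            rw [Finset.sum_smul]
        _ = ∑ y : G, k • y := by
            refine Finset.sum_congr rfl fun y _ => by rw [hcol y]
        _ = k • s := by rw [hs, Finset.smul_sum]
  have e2 : ∑ x : G, ∑ y : G, θ (x, y) • (x + y) = k • s := by
    have hre : ∀ x : G, ∑ y : G, θ (x, y) • (x + y) = ∑ z : G, θ (x, z - x) • z := by
      intro x
      refine Fintype.sum_equiv (Equiv.addLeft x) _ _ fun y => ?_
      simp [Equiv.addLeft]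
    simp only [hre]
    calc ∑ x : G, ∑ z : G, θ (x, z - x) • z
        = ∑ z : G, ∑ x : G, θ (x, z - x) • z := Finset.sum_comm
      _ = ∑ z : G, (∑ x : G, θ (x, z - x)) • z := by
          refine Finset.sum_congr rfl fun z _ => ?_
          rw [Finset.sum_smul]
      _ = ∑ z : G, k • z := by
          refine Finset.sum_congr rfl fun z _ => by rw [hsym z]
      _ = k • s := by rw [hs, Finset.smul_sum]
  have hks0 : k • s = 0 := by
    have h := e1.symm.trans e2
    exact (add_eq_right).mp h
  -- but for odd k, k • s = s = u ≠ 0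
  obtain ⟨m, hm⟩ := hk
  have hkss : k • s = s := by
    rw [hm, add_smul, one_smul, two_mul, add_smul, add_assoc]
    have : m • s + m • s = 0 := by
      rw [← smul_add, h2s, smul_zero]
    rw [← add_assoc, this, zero_add]
  rw [hkss, hsu] at hks0
  exact hu0 hks0
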